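/- arXiv:1601.06485 — 2 statements merged into one kernel-verified Lean document; each statement's English description precedes it below -/
import Mathlib

section
/- The function C_1*(x,t) defined by the paper's formula satisfies the ODE ∂C_1*/∂t = k_a C_1 - (k_d + k_i) C_1* with initial condition C_1*(x,0) = 0. -/
theorem C1star_satisfies_ODE (k_a k_d k_i E₂ b n₁ n₂ : ℝ)
    (hne : n₁ ≠ n₂) (hn₁ : n₁ ≠ k_d + k_i) (hn₂ : n₂ ≠ k_d + k_i)
    (C₁ C₁s : ℝ → ℝ → ℝ)
    (hC₁ : ∀ x t, C₁ x t = E₂ * (Real.exp (-n₁ * t) - Real.exp (-n₂ * t)) * Real.cos (b * x))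
    (hC₁s : ∀ x t, C₁s x t = E₂ * k_a * Real.cos (b * x) /
        ((k_d + k_i - n₁) * (k_d + k_i - n₂)) *
        ((k_d + k_i - n₂) * Real.exp (-n₁ * t) - (k_d + k_i - n₁) * Real.exp (-n₂ * t) +
          (n₂ - n₁) * Real.exp (-(k_d + k_i) * t))) :
    (∀ x t : ℝ,
      deriv (fun τ => C₁s x τ) t = k_a * C₁ x t - (k_d + k_i) * C₁s x t) ∧
    ∀ x : ℝ, C₁s x 0 = 0 := by
  have h1 : k_d + k_i - n₁ ≠ 0 := fun h => hn₁ (by linarith)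
  have h2 : k_d + k_i - n₂ ≠ 0 := fun h => hn₂ (by linarith)
  constructor
  · intro x t
    simp only [hC₁s, hC₁]
    set A := E₂ * k_a * Real.cos (b * x) / ((k_d + k_i - n₁) * (k_d + k_i - n₂)) with hA
    have hd : ∀ c : ℝ, HasDerivAt (fun τ : ℝ => Real.exp (c * τ)) (c * Real.exp (c * t)) t := by
      intro c
      have := (Real.hasDerivAt_exp (c * t)).comp t ((hasDerivAt_id t).const_mul c)
      simpa [mul_comm, Function.comp_def] using this
    have H : HasDerivAt (fun τ : ℝ => A *
        ((k_d + k_i - n₂) * Real.exp (-n₁ * τ) - (k_d + k_i - n₁) * Real.exp (-n₂ * τ) +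
          (n₂ - n₁) * Real.exp (-(k_d + k_i) * τ)))
        (A * ((k_d + k_i - n₂) * (-n₁ * Real.exp (-n₁ * t))
          - (k_d + k_i - n₁) * (-n₂ * Real.exp (-n₂ * t))
          + (n₂ - n₁) * (-(k_d + k_i) * Real.exp (-(k_d + k_i) * t)))) t := by
      exact ((((hd (-n₁)).const_mul _).sub ((hd (-n₂)).const_mul _)).add
        ((hd (-(k_d + k_i))).const_mul _)).const_mul A
    rw [H.deriv, hA]
    field_simp
    ring
  · intro x
    simp [hC₁s]
end

section
/- The function C_i(x,t) defined by the paper's formula satisfies ∂C_i/∂t = k_i C_1* - k_{id} C_i with C_i(x,0) = 0, provided k_{id} ∉ {n_1, n_2, k_d + k_i}. -/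
private lemma expDeriv (c t : ℝ) :
    HasDerivAt (fun τ : ℝ => Real.exp (c * τ)) (c * Real.exp (c * t)) t := by
  have h := ((hasDerivAt_id t).const_mul c).exp
  simpa [mul_comm] using h

private lemma key_alg (k_d k_i k_id n₁ n₂ E1 E2 E3 E4 : ℝ)
    (h3 : k_id - n₁ ≠ 0) (h4 : k_id - n₂ ≠ 0) (h5 : k_id - k_d - k_i ≠ 0) :
    (k_d + k_i - n₂) / (k_id - n₁) * ((-n₁) * E1 - (-k_id) * E4) -
      (k_d + k_i - n₁) / (k_id - n₂) * ((-n₂) * E2 - (-k_id) * E4) +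
      (n₂ - n₁) / (k_id - k_d - k_i) * ((-(k_d + k_i)) * E3 - (-k_id) * E4) =
    ((k_d + k_i - n₂) * E1 - (k_d + k_i - n₁) * E2 + (n₂ - n₁) * E3) -
      k_id * ((k_d + k_i - n₂) / (k_id - n₁) * (E1 - E4) -
        (k_d + k_i - n₁) / (k_id - n₂) * (E2 - E4) +
        (n₂ - n₁) / (k_id - k_d - k_i) * (E3 - E4)) := by
  field_simp
  ring

theorem Ci_satisfies_ODE (k_a k_d k_i k_id E₂ b n₁ n₂ : ℝ)
    (hne : n₁ ≠ n₂) (hn₁ : n₁ ≠ k_d + k_i) (hn₂ : n₂ ≠ k_d + k_i)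
    (hid₁ : k_id ≠ n₁) (hid₂ : k_id ≠ n₂) (hid₃ : k_id ≠ k_d + k_i)
    (C₁s Cᵢ : ℝ → ℝ → ℝ)
    (hC₁s : ∀ x t, C₁s x t = E₂ * k_a * Real.cos (b * x) /
        ((k_d + k_i - n₁) * (k_d + k_i - n₂)) *
        ((k_d + k_i - n₂) * Real.exp (-n₁ * t) - (k_d + k_i - n₁) * Real.exp (-n₂ * t) +
          (n₂ - n₁) * Real.exp (-(k_d + k_i) * t)))
    (hCᵢ : ∀ x t, Cᵢ x t = E₂ * k_a * k_i * Real.cos (b * x) /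
        ((k_d + k_i - n₁) * (k_d + k_i - n₂)) *
        ((k_d + k_i - n₂) / (k_id - n₁) * (Real.exp (-n₁ * t) - Real.exp (-k_id * t)) -
          (k_d + k_i - n₁) / (k_id - n₂) * (Real.exp (-n₂ * t) - Real.exp (-k_id * t)) +
          (n₂ - n₁) / (k_id - k_d - k_i) *
            (Real.exp (-(k_d + k_i) * t) - Real.exp (-k_id * t)))) :
    (∀ x t : ℝ,
      deriv (fun τ => Cᵢ x τ) t = k_i * C₁s x t - k_id * Cᵢ x t) ∧
    ∀ x : ℝ, Cᵢ x 0 = 0 := by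
  have h3 : k_id - n₁ ≠ 0 := fun h => hid₁ (by linarith)
  have h4 : k_id - n₂ ≠ 0 := fun h => hid₂ (by linarith)
  have h5 : k_id - k_d - k_i ≠ 0 := fun h => hid₃ (by linarith)
  constructor
  · intro x t
    set A := E₂ * k_a * k_i * Real.cos (b * x) /
        ((k_d + k_i - n₁) * (k_d + k_i - n₂)) with hA
    have hD : HasDerivAt (fun τ => Cᵢ x τ)
        (A * ((k_d + k_i - n₂) / (k_id - n₁) *
              ((-n₁) * Real.exp (-n₁ * t) - (-k_id) * Real.exp (-k_id * t)) -
            (k_d + k_i - n₁) / (k_id - n₂) *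
              ((-n₂) * Real.exp (-n₂ * t) - (-k_id) * Real.exp (-k_id * t)) +
            (n₂ - n₁) / (k_id - k_d - k_i) *
              ((-(k_d + k_i)) * Real.exp (-(k_d + k_i) * t) -
                (-k_id) * Real.exp (-k_id * t)))) t := by
      have e1 := expDeriv (-n₁) t
      have e2 := expDeriv (-n₂) t
      have e3 := expDeriv (-(k_d + k_i)) t
      have e4 := expDeriv (-k_id) t
      have h := ((((e1.sub e4).const_mul ((k_d + k_i - n₂) / (k_id - n₁))).sub
        ((e2.sub e4).const_mul ((k_d + k_i - n₁) / (k_id - n₂)))).add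
        ((e3.sub e4).const_mul ((n₂ - n₁) / (k_id - k_d - k_i)))).const_mul A
      have hfun : (fun τ => Cᵢ x τ) = fun τ => A *
          ((k_d + k_i - n₂) / (k_id - n₁) * (Real.exp (-n₁ * τ) - Real.exp (-k_id * τ)) -
            (k_d + k_i - n₁) / (k_id - n₂) * (Real.exp (-n₂ * τ) - Real.exp (-k_id * τ)) +
            (n₂ - n₁) / (k_id - k_d - k_i) *
              (Real.exp (-(k_d + k_i) * τ) - Real.exp (-k_id * τ))) := by
        funext τ; rw [hCᵢ]
      rw [hfun]
      exact h
    rw [hD.deriv, hC₁s, hCᵢ,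
      key_alg k_d k_i k_id n₁ n₂ (Real.exp (-n₁ * t)) (Real.exp (-n₂ * t))
        (Real.exp (-(k_d + k_i) * t)) (Real.exp (-k_id * t)) h3 h4 h5, hA]
    ring
  · intro x
    rw [hCᵢ]
    simp
end
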